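/- For every n ≥ 3, every X ∈ Sym(C_n) (real symmetric n×n with X[i][j] ≠ 0 iff i - j ≡ ±1 mod n for i ≠ j, arbitrary diagonal) and every λ ∈ ℂ, the matrix obtained from X - λI by deleting rows 1 and 2 has rank n - 2; consequently (X, [e_1, e_2]) is controllable for all X ∈ Sym(C_n). -/

import Mathlib

/-- For `n ≥ 3` and `X ∈ Sym(C_n)` (symmetric, off-diagonal entry `(i,j)` nonzero iff
`i - j ≡ ±1 (mod n)`, free diagonal), deleting rows 1 and 2 from `X - λI` always
leaves rank `n-2`; consequently `(X, [e_1, e_2])` is controllable for all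
`X ∈ Sym(C_n)`. Vertices `1,…,n` are represented by `Fin n`. -/
lemma key (n : ℕ) (hn : 3 ≤ n) (X : Matrix (Fin n) (Fin n) ℝ)
    (hedge : ∀ a b : Fin n, ((a.1 + 1) % n = b.1 ∨ (b.1 + 1) % n = a.1) → X a b ≠ 0)
    (hnonedge : ∀ a b : Fin n, a ≠ b →
      ¬((a.1 + 1) % n = b.1 ∨ (b.1 + 1) % n = a.1) → X a b = 0)
    (μ : ℂ) (c : Fin n → ℂ)
    (h0 : c ⟨0, by omega⟩ = 0) (h1 : c ⟨1, by omega⟩ = 0)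
    (hcol : ∀ j : Fin n, ∑ r, c r * (X.map Complex.ofReal - μ • 1) r j = 0) :
    ∀ r, c r = 0 := by
  set M := X.map Complex.ofReal - μ • (1 : Matrix (Fin n) (Fin n) ℂ) with hM
  have offdiag : ∀ a b : Fin n, a ≠ b → M a b = Complex.ofReal (X a b) := by
    intro a b hab
    simp [hM, Matrix.sub_apply, Matrix.smul_apply, Matrix.one_apply, hab]
  suffices h : ∀ m, ∀ (hm : m < n), c ⟨m, hm⟩ = 0 by
    intro r; exact h r.1 r.2
  intro m
  induction m using Nat.strong_induction_on with
  | _ rv ih' =>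
  intro hr
  have ih : ∀ a : Fin n, a.1 < rv → c a = 0 := fun a ha => ih' a.1 ha a.2
  match rv, hr, ih with
  | 0, hr, ih => exact h0
  | 1, hr, ih => exact h1
  | (k+2), hr, ih =>
    -- use column k+1
    have hj : k + 1 < n := by omega
    have hsum := hcol ⟨k+1, hj⟩
    have hne : (⟨k+2, hr⟩ : Fin n) ≠ ⟨k+1, hj⟩ := by
      simp [Fin.ext_iff]
    have hred : ∑ a, c a * M a ⟨k+1, hj⟩ = c ⟨k+2, hr⟩ * M ⟨k+2, hr⟩ ⟨k+1, hj⟩ := by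
      apply Finset.sum_eq_single
      · intro a _ ha
        have hav : a.1 ≠ k + 2 := by simpa [Fin.ext_iff] using ha
        rcases lt_or_gt_of_ne hav with hlt | hgt
        · rw [ih a hlt, zero_mul]
        · -- a.1 > k+2 : entry zero
          have hane : a ≠ ⟨k+1, hj⟩ := by
            exact Fin.ne_of_val_ne (show a.1 ≠ k+1 by omega)
          rw [offdiag a _ hane, hnonedge a ⟨k+1, hj⟩ hane, Complex.ofReal_zero, mul_zero]
          show ¬((a.1 + 1) % n = k + 1 ∨ (k + 1 + 1) % n = a.1)
          have ha2 := a.2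
          rintro (h | h)
          · rcases Nat.lt_or_ge (a.1+1) n with h' | h'
            · rw [Nat.mod_eq_of_lt h'] at h; omega
            · have hh : a.1 + 1 = n := by omega
              rw [hh, Nat.mod_self] at h; omega
          · rw [Nat.mod_eq_of_lt (by omega)] at h
            omega
      · intro h; exact absurd (Finset.mem_univ _) h
    rw [hred] at hsum
    have hXne : X ⟨k+2, hr⟩ ⟨k+1, hj⟩ ≠ 0 := by
      apply hedge
      right
      simp [Nat.mod_eq_of_lt (show k+1+1 < n by omega)]
    rw [offdiag _ _ hne] at hsum
    rcases mul_eq_zero.mp hsum with h | h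
    · exact h
    · exact absurd (Complex.ofReal_eq_zero.mp h) hXne

theorem stmt19 (n : ℕ) (hn : 3 ≤ n) (X : Matrix (Fin n) (Fin n) ℝ)
    (hsym : X.IsSymm)
    (hedge : ∀ a b : Fin n, ((a.1 + 1) % n = b.1 ∨ (b.1 + 1) % n = a.1) → X a b ≠ 0)
    (hnonedge : ∀ a b : Fin n, a ≠ b →
      ¬((a.1 + 1) % n = b.1 ∨ (b.1 + 1) % n = a.1) → X a b = 0) :
    (∀ μ : ℂ,
      (Matrix.of fun (r : Fin (n - 2)) (c : Fin n) =>
        (X.map Complex.ofReal - μ • 1) ⟨r.1 + 2, by have := r.2; omega⟩ c).rank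
        = n - 2) ∧
    (∀ μ : ℂ,
      (Matrix.fromCols (X.map Complex.ofReal - μ • 1)
        (Matrix.of fun (r : Fin n) (c : Fin 2) =>
          if r.1 = (if c = 0 then 0 else 1) then (1 : ℂ) else 0)).rank = n) := by
  constructor
  · intro μ
    set M := X.map Complex.ofReal - μ • (1 : Matrix (Fin n) (Fin n) ℂ) with hM
    set A : Matrix (Fin (n-2)) (Fin n) ℂ :=
      Matrix.of fun (r : Fin (n - 2)) (c : Fin n) =>
        M ⟨r.1 + 2, by have := r.2; omega⟩ c with hA
    have hli : LinearIndependent ℂ A.row := by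
      rw [Fintype.linearIndependent_iff]
      intro g hg
      set e : Fin (n-2) ↪ Fin n :=
        ⟨fun i => ⟨i.1 + 2, by have := i.2; omega⟩,
         fun i j hij => Fin.ext (by simpa [Fin.ext_iff] using hij)⟩ with he
      set c : Fin n → ℂ := fun a => if h : 2 ≤ a.1 then g ⟨a.1 - 2, by have := a.2; omega⟩ else 0
        with hc
      have hcol : ∀ j : Fin n, ∑ r, c r * M r j = 0 := by
        intro j
        have step1 : ∑ r, c r * M r j = ∑ r ∈ Finset.univ.map e, c r * M r j := by
          refine (Finset.sum_subset (Finset.subset_univ _) ?_).symm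
          intro a _ ha
          have : ¬ 2 ≤ a.1 := by
            intro h2
            apply ha
            simp only [Finset.mem_map, Finset.mem_univ, true_and, he]
            exact ⟨⟨a.1 - 2, by have := a.2; omega⟩, Fin.ext (by show a.1 - 2 + 2 = a.1; omega)⟩
          simp [hc, this]
        rw [step1, Finset.sum_map]
        have step2 : ∀ i : Fin (n-2), c (e i) * M (e i) j = g i * A i j := by
          intro i
          have h2 : 2 ≤ (e i).1 := by rw [he]; show 2 ≤ i.1 + 2; omega
          simp only [hc, h2, dif_pos, hA, Matrix.of_apply, he]
          congr 1
        rw [Finset.sum_congr rfl fun i _ => step2 i]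
        have := congrFun hg j
        simpa [Finset.sum_apply] using this
      have hz := key n hn X hedge hnonedge μ c (by simp [hc]) (by simp [hc]) hcol
      intro i
      have := hz ⟨i.1 + 2, by have := i.2; omega⟩
      simpa [hc] using this
    rw [hli.rank_matrix, Fintype.card_fin]
  · intro μ
    set M := X.map Complex.ofReal - μ • (1 : Matrix (Fin n) (Fin n) ℂ) with hM
    set E : Matrix (Fin n) (Fin 2) ℂ :=
      Matrix.of fun (r : Fin n) (c : Fin 2) =>
        if r.1 = (if c = 0 then 0 else 1) then (1 : ℂ) else 0 with hE
    have hli : LinearIndependent ℂ (Matrix.fromCols M E).row := by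
      rw [Fintype.linearIndependent_iff]
      intro g hg
      have heval : ∀ j, ∑ r, g r * (Matrix.fromCols M E) r j = 0 := by
        intro j
        have := congrFun hg j
        simpa [Finset.sum_apply] using this
      have h0 : g ⟨0, by omega⟩ = 0 := by
        have := heval (Sum.inr 0)
        rw [Finset.sum_eq_single (⟨0, by omega⟩ : Fin n)] at this
        · simpa [hE, Matrix.fromCols] using this
        · intro b _ hb
          have : b.1 ≠ 0 := fun h => hb (Fin.ext h)
          simp [hE, Matrix.fromCols, this]
        · intro h; exact absurd (Finset.mem_univ _) h
      have h1 : g ⟨1, by omega⟩ = 0 := by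
        have := heval (Sum.inr 1)
        rw [Finset.sum_eq_single (⟨1, by omega⟩ : Fin n)] at this
        · simpa [hE, Matrix.fromCols] using this
        · intro b _ hb
          have : b.1 ≠ 1 := fun h => hb (Fin.ext h)
          simp [hE, Matrix.fromCols, this]
        · intro h; exact absurd (Finset.mem_univ _) h
      have hcol : ∀ j : Fin n, ∑ r, g r * M r j = 0 := by
        intro j
        have := heval (Sum.inl j)
        simpa [Matrix.fromCols] using this
      exact key n hn X hedge hnonedge μ g h0 h1 hcol
    rw [hli.rank_matrix, Fintype.card_fin]
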